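/- For all real t ≥ 2, let g(x) = x^3 - 4(4t + 3)x - 48t (the cubic from i = 3) and r(x) = -16((8t - 1)x^2 - 24t x - 80t^2). Then g(2√(4t+3)) = -48t < 0, hence the largest root τ(g) of g satisfies τ(g) > 2√(4t+3); moreover the unique positive root x0 of r satisfies x0 < 2√(4t+3), and r(τ(g)) < r(2√(4t+3)) < 0. -/
import Mathlib


/-- Key estimates in Case 2 (`i = 3`) of Lemma 4.3, for real `t ≥ 2`, with
`g(x) = x^3 - 4(4t+3)x - 48t` and `r(x) = -16((8t-1)x^2 - 24t x - 80t^2)`. -/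
theorem stmt_16 (t : ℝ) (ht : 2 ≤ t) (tau x0 : ℝ)
    (htau : IsGreatest {x : ℝ | x ^ 3 - 4 * (4 * t + 3) * x - 48 * t = 0} tau)
    (hx0pos : 0 < x0)
    (hx0 : -16 * ((8 * t - 1) * x0 ^ 2 - 24 * t * x0 - 80 * t ^ 2) = 0) :
    (2 * Real.sqrt (4 * t + 3)) ^ 3
        - 4 * (4 * t + 3) * (2 * Real.sqrt (4 * t + 3)) - 48 * t = -48 * t
    ∧ -48 * t < 0
    ∧ tau > 2 * Real.sqrt (4 * t + 3)
    ∧ x0 < 2 * Real.sqrt (4 * t + 3)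
    ∧ -16 * ((8 * t - 1) * tau ^ 2 - 24 * t * tau - 80 * t ^ 2)
        < -16 * ((8 * t - 1) * (2 * Real.sqrt (4 * t + 3)) ^ 2
            - 24 * t * (2 * Real.sqrt (4 * t + 3)) - 80 * t ^ 2)
    ∧ -16 * ((8 * t - 1) * (2 * Real.sqrt (4 * t + 3)) ^ 2
        - 24 * t * (2 * Real.sqrt (4 * t + 3)) - 80 * t ^ 2) < 0 := by
  set s := Real.sqrt (4 * t + 3) with hs
  have h43 : (0:ℝ) < 4 * t + 3 := by linarith
  have hs2 : s ^ 2 = 4 * t + 3 := Real.sq_sqrt h43.le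
  have hs_pos : 0 < s := Real.sqrt_pos.mpr h43
  -- g(2s) = -48t
  have hg2s : (2 * s) ^ 3 - 4 * (4 * t + 3) * (2 * s) - 48 * t = -48 * t := by
    have : (2 * s) ^ 3 = 8 * (s ^ 2) * s := by ring
    rw [this, hs2]; ring
  have hq : (8 * t - 1) * x0 ^ 2 - 24 * t * x0 - 80 * t ^ 2 = 0 := by linarith
  -- key: q(2s) > 0, i.e. 48t² + 80t - 12 - 48 t s > 0
  have hkey : (8 * t - 1) * (2 * s) ^ 2 - 24 * t * (2 * s) - 80 * t ^ 2 > 0 := by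
    have h1 : (48 * t ^ 2 + 80 * t - 12) ^ 2 - (48 * t * s) ^ 2 > 0 := by
      have : (48 * t * s) ^ 2 = 48 ^ 2 * t ^ 2 * (4 * t + 3) := by
        rw [mul_pow, mul_pow, hs2]
      rw [this]; nlinarith [sq_nonneg t, sq_nonneg (t - 2)]
    have h2 : 48 * t * s < 48 * t ^ 2 + 80 * t - 12 := by
      nlinarith [mul_pos (mul_pos (by linarith : (0:ℝ) < 48 * t) hs_pos)
        (mul_pos (by linarith : (0:ℝ) < 48 * t) hs_pos)]
    have h3 : (2 * s) ^ 2 = 4 * (4 * t + 3) := by rw [mul_pow, hs2]; ring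
    rw [h3]; nlinarith
  -- x0 bound below: (8t-1) x0 > 24t
  have hx0lb : (8 * t - 1) * x0 > 24 * t := by
    nlinarith [mul_pos hx0pos hx0pos, sq_nonneg x0]
  -- x0 < 2s
  have hx0lt : x0 < 2 * s := by
    by_contra h
    push_neg at h
    -- q convex, q(0) < 0, q(x0) = 0, 2s ∈ [0, x0] but q(2s) > 0
    have hfac : (0:ℝ) ≤ (8 * t - 1) * (x0 + 2 * s) - 24 * t := by nlinarith [hs_pos]
    nlinarith [mul_nonneg (sub_nonneg.mpr h) hfac, hs_pos]
  -- tau > 2s via IVT on [2s, 8t]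
  have htau_gt : tau > 2 * s := by
    have h2s8t : 2 * s ≤ 8 * t := by
      nlinarith [hs2, hs_pos, sq_nonneg (s - 2 * t)]
    have hcont : ContinuousOn (fun x : ℝ => x ^ 3 - 4 * (4 * t + 3) * x - 48 * t)
        (Set.Icc (2 * s) (8 * t)) := by fun_prop
    have hivt := intermediate_value_Icc h2s8t hcont
    have h0mem : (0:ℝ) ∈ Set.Icc ((2 * s) ^ 3 - 4 * (4 * t + 3) * (2 * s) - 48 * t)
        ((8 * t) ^ 3 - 4 * (4 * t + 3) * (8 * t) - 48 * t) := by
      constructor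
      · rw [hg2s]; linarith
      · nlinarith
    obtain ⟨c, hc, hfc⟩ := hivt h0mem
    have hcmem : c ∈ {x : ℝ | x ^ 3 - 4 * (4 * t + 3) * x - 48 * t = 0} := hfc
    have hctau : c ≤ tau := htau.2 hcmem
    have hcne : c ≠ 2 * s := by
      intro h
      rw [h] at hcmem
      have : -48 * t = 0 := by rw [← hg2s]; exact hcmem
      linarith
    have := hc.1
    rcases lt_or_eq_of_le this with h' | h'
    · linarith
    · exact absurd h'.symm hcne
  refine ⟨hg2s, by linarith, htau_gt, hx0lt, ?_, by nlinarith⟩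
  -- q(tau) > q(2s)
  have : (8 * t - 1) * (tau + 2 * s) - 24 * t > 0 := by nlinarith
  nlinarith [mul_pos (sub_pos.mpr htau_gt) this]
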